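/- arXiv:2605.05610 — 2 statements merged into one kernel-verified Lean document; each statement's English description precedes it below -/
import Mathlib

section
/- Let σ ≥ 0, 0 ≤ τ ≤ σ, and 0 < ρ < 1. Suppose the sequence (ψ̂_ρ(ℓ))_{ℓ≥1} of real numbers satisfies |1 − ψ̂_ρ(ℓ)| ≤ c₁ (ρℓ)^σ for 1 ≤ ℓ ≤ ℓ_ρ := ⌊ρ^{-1} − 1⌋, and |ψ̂_ρ(ℓ)| ≤ c₂ for ℓ > ℓ_ρ. Then there is a constant C depending only on c₁, c₂, σ, τ (not on ρ) such that for every ℓ ≥ 1, (1 + ℓ(ℓ+1))^τ |1 − ψ̂_ρ(ℓ)|² ≤ C ρ^{2(σ−τ)} (1 + ℓ(ℓ+1))^σ. -/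
/-- Pointwise multiplier estimate: if `|1 − ψ̂_ρ(ℓ)| ≤ c₁ (ρℓ)^σ` for `1 ≤ ℓ ≤ ⌊ρ⁻¹−1⌋` and
`|ψ̂_ρ(ℓ)| ≤ c₂` beyond, then `(1+ℓ(ℓ+1))^τ |1−ψ̂_ρ(ℓ)|² ≤ C ρ^{2(σ−τ)} (1+ℓ(ℓ+1))^σ`
for a constant `C = C(c₁, c₂, σ, τ)` independent of `ρ`. -/
theorem multiplier_pointwise_estimate (σ τ c₁ c₂ : ℝ)
    (hσ : 0 ≤ σ) (hτ0 : 0 ≤ τ) (hτσ : τ ≤ σ) (hc₁ : 0 < c₁) (hc₂ : 0 < c₂) :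
    ∃ C : ℝ, 0 < C ∧ ∀ ρ : ℝ, 0 < ρ → ρ < 1 → ∀ ψ : ℕ → ℝ,
      (∀ ℓ : ℕ, 1 ≤ ℓ → ℓ ≤ ⌊ρ⁻¹ - 1⌋₊ → |1 - ψ ℓ| ≤ c₁ * (ρ * ℓ) ^ σ) →
      (∀ ℓ : ℕ, ⌊ρ⁻¹ - 1⌋₊ < ℓ → |ψ ℓ| ≤ c₂) →
      ∀ ℓ : ℕ, 1 ≤ ℓ →
        (1 + (ℓ : ℝ) * (ℓ + 1)) ^ τ * |1 - ψ ℓ| ^ 2 ≤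
          C * ρ ^ (2 * (σ - τ)) * (1 + (ℓ : ℝ) * (ℓ + 1)) ^ σ := by
  refine ⟨c₁ ^ 2 + (1 + c₂) ^ 2 * (2 : ℝ) ^ (σ - τ), by positivity, ?_⟩
  intro ρ hρ0 hρ1 ψ h1 h2 ℓ hℓ
  have hℓR : (1 : ℝ) ≤ (ℓ : ℝ) := by exact_mod_cast hℓ
  set a : ℝ := 1 + (ℓ : ℝ) * (ℓ + 1) with ha_def
  have ha1 : (1 : ℝ) ≤ a := by nlinarith
  have ha0 : (0 : ℝ) < a := by linarith
  have hρτ : (0 : ℝ) < ρ ^ (2 * (σ - τ)) := Real.rpow_pos_of_pos hρ0 _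
  have haσ : (0 : ℝ) < a ^ σ := Real.rpow_pos_of_pos ha0 _
  have h2pos : (0 : ℝ) < (2 : ℝ) ^ (σ - τ) := Real.rpow_pos_of_pos (by norm_num) _
  have hinv : (1 : ℝ) < ρ⁻¹ := (one_lt_inv₀ hρ0).mpr hρ1  -- may need name fix
  have hsplit : a ^ τ * a ^ (σ - τ) = a ^ σ := by
    rw [← Real.rpow_add ha0]; ring_nf
  rcases le_or_gt ℓ ⌊ρ⁻¹ - 1⌋₊ with hcase | hcase
  · -- small ℓ
    have hb := h1 ℓ hℓ hcase
    have hfl : (ℓ : ℝ) ≤ ρ⁻¹ - 1 :=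
      le_trans (Nat.cast_le.mpr hcase) (Nat.floor_le (by linarith))
    have hρℓ0 : (0 : ℝ) < ρ * ℓ := by positivity
    have hρℓ1 : ρ * ℓ ≤ 1 := by
      nlinarith [mul_le_mul_of_nonneg_left hfl hρ0.le, mul_inv_cancel₀ hρ0.ne']
    have hsq : |1 - ψ ℓ| ^ 2 ≤ c₁ ^ 2 * ((ρ * ℓ) ^ σ) ^ 2 := by
      rw [← mul_pow]
      exact pow_le_pow_left₀ (abs_nonneg _) hb 2
    have e1 : ((ρ * ℓ) ^ σ) ^ 2 = (ρ * ℓ) ^ (2 * σ) := by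
      rw [← Real.rpow_natCast ((ρ * ℓ) ^ σ) 2, ← Real.rpow_mul hρℓ0.le]
      norm_num; ring_nf
    have step1 : (ρ * ℓ) ^ (2 * σ) ≤ (ρ * ℓ) ^ (2 * (σ - τ)) :=
      Real.rpow_le_rpow_of_exponent_ge hρℓ0 hρℓ1 (by linarith)
    have step2 : (ρ * (ℓ : ℝ)) ^ (2 * (σ - τ)) = ρ ^ (2 * (σ - τ)) * (ℓ : ℝ) ^ (2 * (σ - τ)) :=
      Real.mul_rpow hρ0.le (Nat.cast_nonneg ℓ)
    have step3 : (ℓ : ℝ) ^ (2 * (σ - τ)) ≤ a ^ (σ - τ) := by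
      have e2 : (ℓ : ℝ) ^ (2 * (σ - τ)) = ((ℓ : ℝ) ^ 2) ^ (σ - τ) := by
        rw [← Real.rpow_natCast (ℓ : ℝ) 2, ← Real.rpow_mul (Nat.cast_nonneg ℓ)]
        norm_num
      rw [e2]
      exact Real.rpow_le_rpow (by positivity) (by nlinarith) (by linarith)
    have key : a ^ τ * |1 - ψ ℓ| ^ 2 ≤ c₁ ^ 2 * ρ ^ (2 * (σ - τ)) * a ^ σ := by
      calc a ^ τ * |1 - ψ ℓ| ^ 2
          ≤ a ^ τ * (c₁ ^ 2 * ((ρ * ℓ) ^ σ) ^ 2) := by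
            apply mul_le_mul_of_nonneg_left hsq (Real.rpow_nonneg ha0.le _)
        _ = c₁ ^ 2 * ((ρ * ℓ) ^ (2 * σ)) * a ^ τ := by rw [e1]; ring
        _ ≤ c₁ ^ 2 * ((ρ * ℓ) ^ (2 * (σ - τ))) * a ^ τ := by
            apply mul_le_mul_of_nonneg_right _ (Real.rpow_nonneg ha0.le _)
            exact mul_le_mul_of_nonneg_left step1 (by positivity)
        _ = c₁ ^ 2 * ρ ^ (2 * (σ - τ)) * ((ℓ : ℝ) ^ (2 * (σ - τ)) * a ^ τ) := by
            rw [step2]; ring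
        _ ≤ c₁ ^ 2 * ρ ^ (2 * (σ - τ)) * (a ^ (σ - τ) * a ^ τ) := by
            apply mul_le_mul_of_nonneg_left _ (by positivity)
            exact mul_le_mul_of_nonneg_right step3 (Real.rpow_nonneg ha0.le _)
        _ = c₁ ^ 2 * ρ ^ (2 * (σ - τ)) * a ^ σ := by rw [mul_comm (a ^ (σ - τ)), hsplit]
    calc a ^ τ * |1 - ψ ℓ| ^ 2 ≤ c₁ ^ 2 * ρ ^ (2 * (σ - τ)) * a ^ σ := key
      _ ≤ (c₁ ^ 2 + (1 + c₂) ^ 2 * (2 : ℝ) ^ (σ - τ)) * ρ ^ (2 * (σ - τ)) * a ^ σ := by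
          apply mul_le_mul_of_nonneg_right _ haσ.le
          apply mul_le_mul_of_nonneg_right _ hρτ.le
          linarith [mul_nonneg (sq_nonneg (1 + c₂)) h2pos.le]
  · -- large ℓ
    have hb := h2 ℓ hcase
    have habs : |1 - ψ ℓ| ≤ 1 + c₂ := by
      calc |1 - ψ ℓ| ≤ |(1:ℝ)| + |ψ ℓ| := abs_sub _ _
        _ ≤ 1 + c₂ := by rw [abs_one]; linarith
    have hflt : ρ⁻¹ - 1 < (ℓ : ℝ) := (Nat.floor_lt (by linarith)).mp hcase
    have hkey : ρ⁻¹ ^ 2 / 2 ≤ a := by nlinarith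
    have hhalf : (0 : ℝ) < ρ⁻¹ ^ 2 / 2 := by positivity
    have step : a ^ (τ - σ) ≤ (ρ⁻¹ ^ 2 / 2) ^ (τ - σ) :=
      Real.rpow_le_rpow_of_nonpos hhalf hkey (by linarith)
    have e3 : (ρ⁻¹ ^ 2 / 2) ^ (τ - σ) = (2 : ℝ) ^ (σ - τ) * ρ ^ (2 * (σ - τ)) := by
      rw [Real.div_rpow (by positivity) (by norm_num)]
      rw [← Real.rpow_natCast ρ⁻¹ 2, ← Real.rpow_neg_one ρ, ← Real.rpow_mul hρ0.le,
        ← Real.rpow_mul hρ0.le]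
      rw [div_eq_mul_inv, ← Real.rpow_neg (by norm_num : (0:ℝ) ≤ 2)]
      ring_nf
    have hsplit2 : a ^ τ = a ^ σ * a ^ (τ - σ) := by
      rw [← Real.rpow_add ha0]; ring_nf
    have key : a ^ τ * |1 - ψ ℓ| ^ 2 ≤
        (1 + c₂) ^ 2 * (2 : ℝ) ^ (σ - τ) * ρ ^ (2 * (σ - τ)) * a ^ σ := by
      calc a ^ τ * |1 - ψ ℓ| ^ 2
          ≤ a ^ τ * (1 + c₂) ^ 2 := by
            apply mul_le_mul_of_nonneg_left _ (Real.rpow_nonneg ha0.le _)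
            exact pow_le_pow_left₀ (abs_nonneg _) habs 2
        _ = a ^ σ * a ^ (τ - σ) * (1 + c₂) ^ 2 := by rw [hsplit2]
        _ ≤ a ^ σ * ((2 : ℝ) ^ (σ - τ) * ρ ^ (2 * (σ - τ))) * (1 + c₂) ^ 2 := by
            apply mul_le_mul_of_nonneg_right _ (by positivity)
            rw [← e3]
            exact mul_le_mul_of_nonneg_left step haσ.le
        _ = (1 + c₂) ^ 2 * (2 : ℝ) ^ (σ - τ) * ρ ^ (2 * (σ - τ)) * a ^ σ := by ring
    calc a ^ τ * |1 - ψ ℓ| ^ 2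
        ≤ (1 + c₂) ^ 2 * (2 : ℝ) ^ (σ - τ) * ρ ^ (2 * (σ - τ)) * a ^ σ := key
      _ ≤ (c₁ ^ 2 + (1 + c₂) ^ 2 * (2 : ℝ) ^ (σ - τ)) * ρ ^ (2 * (σ - τ)) * a ^ σ := by
          apply mul_le_mul_of_nonneg_right _ haσ.le
          apply mul_le_mul_of_nonneg_right _ hρτ.le
          linarith [sq_nonneg c₁]
end

section
/- Let σ > 1 and 0 < ρ < 1, and set ℓ_ρ = ⌊ρ^{-1} − 1⌋. Suppose real numbers b_ℓ satisfy |b_ℓ| ≤ c₁ (ρℓ)^σ for 1 ≤ ℓ ≤ ℓ_ρ and |b_ℓ| ≤ c₂ for ℓ > ℓ_ρ. Then the series S_ρ = Σ_{ℓ≥1} ℓ (1+ℓ²)^{-σ} b_ℓ² converges and S_ρ ≤ C ρ^{2(σ−1)} for a constant C independent of ρ. -/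
section LowHighAux
open Real Finset

lemma lemA' (q : ℝ) (hq : 0 < q) (x : ℝ) (hx : 2 ≤ x) :
    q * x ^ (-1 - q) ≤ (x - 1) ^ (-q) - x ^ (-q) := by
  have hx0 : (0:ℝ) < x := by linarith
  have hx1 : (0:ℝ) < x - 1 := by linarith
  have key : 1 + q / x ≤ (x / (x - 1)) ^ q := by
    rcases le_or_gt 1 q with hq1 | hq1
    · have hs : (-1:ℝ) ≤ 1 / (x - 1) := by
        have : (0:ℝ) < 1 / (x - 1) := by positivity
        linarith
      have h := one_add_mul_self_le_rpow_one_add hs hq1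
      have he : 1 + 1 / (x - 1) = x / (x - 1) := by field_simp; ring
      rw [he] at h
      refine le_trans ?_ h
      have : q / x ≤ q * (1 / (x - 1)) := by
        rw [mul_one_div]
        exact div_le_div_of_nonneg_left hq.le hx1 (by linarith)
      linarith
    · have hs : (-1:ℝ) ≤ -(1 / x) := by
        have : 1 / x ≤ 1 := by rw [div_le_one hx0]; linarith
        linarith
      have h := rpow_one_add_le_one_add_mul_self hs hq.le hq1.le
      have he : 1 + -(1 / x) = (x - 1) / x := by field_simp; ring
      rw [he] at h
      have h' : ((x - 1) / x) ^ q ≤ 1 - q * (1 / x) := by linarith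
      have hqx : q / x ≤ 1 / 2 := by
        apply div_le_div₀ (by norm_num) hq1.le (by norm_num) hx
      have hinv : (x / (x - 1)) ^ q = (((x - 1) / x) ^ q)⁻¹ := by
        rw [← Real.inv_rpow (by positivity), inv_div]
      rw [hinv]
      have hb : (0:ℝ) < ((x - 1) / x) ^ q := by positivity
      rw [inv_eq_one_div, le_div_iff₀ hb]
      have hqx2 : q * (1 / x) = q / x := by ring
      nlinarith [sq_nonneg (q / x), hb, h']
  have e1 : x ^ (-1 - q) = x⁻¹ * x ^ (-q) := by
    rw [show -1 - q = -1 + -q by ring, Real.rpow_add hx0, Real.rpow_neg_one]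
  have e2 : (x / (x - 1)) ^ q * x ^ (-q) = (x - 1) ^ (-q) := by
    rw [Real.div_rpow hx0.le hx1.le, Real.rpow_neg hx0.le, Real.rpow_neg hx1.le]
    have h1 : x ^ q ≠ 0 := ne_of_gt (Real.rpow_pos_of_pos hx0 _)
    have h2 : (x - 1) ^ q ≠ 0 := ne_of_gt (Real.rpow_pos_of_pos hx1 _)
    field_simp
  have hxq : (0:ℝ) < x ^ (-q) := Real.rpow_pos_of_pos hx0 _
  have hkey2 : (1 + q / x) * x ^ (-q) ≤ (x - 1) ^ (-q) := by
    calc (1 + q / x) * x ^ (-q) ≤ (x / (x - 1)) ^ q * x ^ (-q) :=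
          mul_le_mul_of_nonneg_right key hxq.le
      _ = (x - 1) ^ (-q) := e2
  have expand : (1 + q / x) * x ^ (-q) = x ^ (-q) + q * (x⁻¹ * x ^ (-q)) := by
    field_simp
  rw [e1]
  linarith

lemma tele' (q : ℝ) (hq : 0 < q) (N : ℕ) (hN : 1 ≤ N) (M : ℕ) :
    ∑ ℓ ∈ Finset.Ioc N M, q * (ℓ:ℝ) ^ (-1 - q) ≤ (N:ℝ) ^ (-q) := by
  have hNpos : (0:ℝ) < (N:ℝ) ^ (-q) := by
    apply Real.rpow_pos_of_pos; exact_mod_cast hN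
  rcases le_or_gt M N with hMN | hNM
  · rw [Finset.Ioc_eq_empty (by omega)]; simpa using hNpos.le
  -- main: show sum ≤ N^{-q} - M^{-q}
  have main : ∀ M, N ≤ M → ∑ ℓ ∈ Finset.Ioc N M, q * (ℓ:ℝ) ^ (-1 - q)
      ≤ (N:ℝ) ^ (-q) - (M:ℝ) ^ (-q) := by
    intro M
    induction M with
    | zero => intro h; exact absurd h (by omega)
    | succ M ih =>
      intro h
      rcases Nat.lt_or_ge N (M+1) with h' | h'
      · have hNM' : N ≤ M := by omega
        rw [Finset.sum_Ioc_succ_top hNM']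
        have hA := lemA' q hq ((M:ℝ)+1) (by
          have : 1 ≤ M := by omega
          have : (1:ℝ) ≤ (M:ℝ) := by exact_mod_cast this
          linarith)
        have cast1 : ((M+1:ℕ):ℝ) = (M:ℝ)+1 := by push_cast; ring
        have cast2 : (M:ℝ)+1-1 = (M:ℝ) := by ring
        rw [cast2] at hA
        rw [cast1]
        have := ih hNM'
        linarith
      · have hE : N = M + 1 := by omega
        rw [hE, Finset.Ioc_self, Finset.sum_empty, sub_self]
  have := main M hNM.le
  have hMq : (0:ℝ) ≤ (M:ℝ) ^ (-q) := Real.rpow_nonneg (by positivity) _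
  linarith

lemma tail_bound' (q : ℝ) (hq : 0 < q) (N : ℕ) (hN : 1 ≤ N) :
    ∑' ℓ : ℕ, (if N < ℓ then (ℓ:ℝ) ^ (-1 - q) else 0) ≤ (N:ℝ) ^ (-q) / q := by
  have hsumm0 : Summable (fun ℓ : ℕ => (ℓ:ℝ) ^ (-1 - q)) :=
    Real.summable_nat_rpow.2 (by linarith)
  have hsumm : Summable (fun ℓ : ℕ => (if N < ℓ then (ℓ:ℝ) ^ (-1 - q) else 0)) := by
    apply Summable.of_nonneg_of_le (fun ℓ => by positivity)
      (fun ℓ => by split <;> [exact le_refl _; positivity]) hsumm0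
  apply Summable.tsum_le_of_sum_le hsumm
  intro s
  set M := (s.sup id)
  have hsub : s.filter (N < ·) ⊆ Finset.Ioc N M := by
    intro x hx
    simp only [Finset.mem_filter] at hx
    exact Finset.mem_Ioc.2 ⟨hx.2, Finset.le_sup (f := id) hx.1⟩
  calc ∑ ℓ ∈ s, (if N < ℓ then (ℓ:ℝ) ^ (-1 - q) else 0)
      = ∑ ℓ ∈ s.filter (N < ·), (ℓ:ℝ) ^ (-1 - q) := by
        rw [Finset.sum_filter]
    _ ≤ ∑ ℓ ∈ Finset.Ioc N M, (ℓ:ℝ) ^ (-1 - q) := by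
        apply Finset.sum_le_sum_of_subset_of_nonneg hsub
        intro i _ _; positivity
    _ ≤ (N:ℝ) ^ (-q) / q := by
        rw [le_div_iff₀ hq]
        calc (∑ ℓ ∈ Finset.Ioc N M, (ℓ:ℝ) ^ (-1 - q)) * q
            = ∑ ℓ ∈ Finset.Ioc N M, q * (ℓ:ℝ) ^ (-1 - q) := by
              rw [Finset.sum_mul]; apply Finset.sum_congr rfl; intros; ring
          _ ≤ (N:ℝ) ^ (-q) := tele' q hq N hN M


lemma aux1' (ρ : ℝ) (hρ0 : 0 < ρ) (q σ : ℝ) (hq : q = 2*σ-2) :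
    ρ ^ (2*σ) * (ρ⁻¹) ^ (2:ℕ) = ρ ^ q := by
  rw [inv_pow, ← Real.rpow_natCast ρ 2, ← Real.rpow_neg hρ0.le, ← Real.rpow_add hρ0, hq]
  norm_num
  ring_nf

lemma aux2' (ℓ : ℕ) (σ : ℝ) (hσ : 0 ≤ σ) (hl : 1 ≤ ℓ) :
    (ℓ:ℝ) * (1 + (ℓ:ℝ) ^ 2) ^ (-σ) ≤ (ℓ:ℝ) ^ (1 - 2*σ) := by
  have hl1 : (1:ℝ) ≤ (ℓ:ℝ) := by exact_mod_cast hl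
  have hl0 : (0:ℝ) < (ℓ:ℝ) := by linarith
  have h1 : (1 + (ℓ:ℝ) ^ 2) ^ (-σ) ≤ ((ℓ:ℝ) ^ 2) ^ (-σ) :=
    Real.rpow_le_rpow_of_nonpos (by positivity) (by linarith) (by linarith)
  have h2 : ((ℓ:ℝ) ^ 2) ^ (-σ) = (ℓ:ℝ) ^ (-(2*σ)) := by
    rw [← Real.rpow_natCast (ℓ:ℝ) 2, ← Real.rpow_mul hl0.le]
    norm_num
  calc (ℓ:ℝ) * (1 + (ℓ:ℝ) ^ 2) ^ (-σ) ≤ (ℓ:ℝ) * ((ℓ:ℝ)^2) ^ (-σ) := by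
        apply mul_le_mul_of_nonneg_left h1 hl0.le
    _ = (ℓ:ℝ) ^ (1 - 2*σ) := by
        rw [h2]
        nth_rewrite 1 [← Real.rpow_one (ℓ:ℝ)]
        rw [← Real.rpow_add hl0]
        ring_nf

lemma aux3' (ℓq σ c₁ : ℝ) (b : ℝ) (hb : |b| ≤ c₁ * ℓq ^ σ) (h0 : 0 ≤ ℓq) :
    b ^ 2 ≤ c₁ ^ 2 * ℓq ^ (2*σ) := by
  rw [← sq_abs b]
  calc |b| ^ 2 ≤ (c₁ * ℓq ^ σ) ^ 2 := pow_le_pow_left₀ (abs_nonneg b) hb 2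
    _ = c₁ ^ 2 * ℓq ^ (2*σ) := by
        rw [mul_pow, ← Real.rpow_natCast (ℓq ^ σ) 2, ← Real.rpow_mul h0]
        congr 1
        push_cast; ring

end LowHighAux

open Real Finset

set_option maxHeartbeats 1600000 in
/-- Core summation estimate for the `L∞` error bound: if `σ > 1`,
`|b_ℓ| ≤ c₁ (ρℓ)^σ` for `1 ≤ ℓ ≤ ⌊ρ⁻¹−1⌋` and `|b_ℓ| ≤ c₂` beyond, then
`S_ρ = Σ_{ℓ≥1} ℓ (1+ℓ²)^{-σ} b_ℓ²` converges and `S_ρ ≤ C ρ^{2(σ−1)}` with `C`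
independent of `ρ`. -/
theorem low_high_frequency_sum_estimate (σ c₁ c₂ : ℝ)
    (hσ : 1 < σ) (hc₁ : 0 < c₁) (hc₂ : 0 < c₂) :
    ∃ C : ℝ, 0 < C ∧ ∀ ρ : ℝ, 0 < ρ → ρ < 1 → ∀ b : ℕ → ℝ,
      (∀ ℓ : ℕ, 1 ≤ ℓ → ℓ ≤ ⌊ρ⁻¹ - 1⌋₊ → |b ℓ| ≤ c₁ * (ρ * ℓ) ^ σ) →
      (∀ ℓ : ℕ, ⌊ρ⁻¹ - 1⌋₊ < ℓ → |b ℓ| ≤ c₂) →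
      Summable (fun ℓ : ℕ => (ℓ : ℝ) * (1 + (ℓ : ℝ) ^ 2) ^ (-σ) * b ℓ ^ 2) ∧
      ∑' ℓ : ℕ, (ℓ : ℝ) * (1 + (ℓ : ℝ) ^ 2) ^ (-σ) * b ℓ ^ 2 ≤ C * ρ ^ (2 * (σ - 1)) := by
  set q : ℝ := 2 * σ - 2 with hq_def
  have hq : 0 < q := by rw [hq_def]; linarith
  have hsummT : Summable (fun n : ℕ => (n:ℝ) ^ (-1 - q)) :=
    Real.summable_nat_rpow.2 (by linarith)
  set T : ℝ := ∑' n : ℕ, (n:ℝ) ^ (-1 - q) with hT_def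
  have hT0 : 0 ≤ T := tsum_nonneg (fun n => Real.rpow_nonneg (Nat.cast_nonneg n) _)
  have h2q : (0:ℝ) < 2 ^ q := Real.rpow_pos_of_pos (by norm_num) q
  have h4q : (0:ℝ) < 4 ^ q := Real.rpow_pos_of_pos (by norm_num) q
  refine ⟨2 * c₁ ^ 2 + c₂ ^ 2 * (2 ^ q / q + T * 4 ^ q) + 1, ?_, ?_⟩
  · have : 0 ≤ c₂ ^ 2 * (2 ^ q / q + T * 4 ^ q) := by
      apply mul_nonneg (sq_nonneg _)
      have : 0 ≤ T * 4 ^ q := mul_nonneg hT0 h4q.le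
      have : 0 ≤ 2 ^ q / q := by positivity
      linarith
    nlinarith [sq_nonneg c₁]
  intro ρ hρ0 hρ1 b hlow hhigh
  set N := ⌊ρ⁻¹ - 1⌋₊ with hN_def
  have hρinv1 : (1:ℝ) < ρ⁻¹ := (one_lt_inv₀ hρ0).2 hρ1
  have hNle : (N:ℝ) ≤ ρ⁻¹ - 1 := Nat.floor_le (by linarith)
  have hNgt : ρ⁻¹ - 1 < (N:ℝ) + 1 := Nat.lt_floor_add_one _
  have hexp : ρ ^ (2 * (σ - 1)) = ρ ^ q := by rw [hq_def]; ring_nf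
  set f : ℕ → ℝ := fun ℓ : ℕ => (ℓ : ℝ) * (1 + (ℓ : ℝ) ^ 2) ^ (-σ) * b ℓ ^ 2 with hf_def
  have hf0 : ∀ ℓ, 0 ≤ f ℓ := by
    intro ℓ
    rw [hf_def]; dsimp only
    have : (0:ℝ) < (1 + (ℓ:ℝ)^2) ^ (-σ) := Real.rpow_pos_of_pos (by positivity) _
    positivity
  set g₁ : ℕ → ℝ := fun ℓ => if 1 ≤ ℓ ∧ ℓ ≤ N then c₁ ^ 2 * ρ ^ (2*σ) * ℓ else 0 with hg₁_def
  set g₂ : ℕ → ℝ := fun ℓ => c₂ ^ 2 * (if N < ℓ then (ℓ:ℝ) ^ (-1-q) else 0) with hg₂_def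
  clear_value q T N f g₁ g₂
  have hg₁0 : ∀ ℓ, 0 ≤ g₁ ℓ := by
    intro ℓ; rw [hg₁_def]; dsimp only; split
    · have : (0:ℝ) < ρ ^ (2*σ) := Real.rpow_pos_of_pos hρ0 _
      positivity
    · exact le_refl 0
  have hg₂0 : ∀ ℓ, 0 ≤ g₂ ℓ := by
    intro ℓ; rw [hg₂_def]; dsimp only
    apply mul_nonneg (sq_nonneg _)
    split
    · exact Real.rpow_nonneg (Nat.cast_nonneg _) _
    · exact le_refl 0
  -- pointwise domination
  have hfg : ∀ ℓ, f ℓ ≤ g₁ ℓ + g₂ ℓ := by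
    intro ℓ
    rcases Nat.eq_zero_or_pos ℓ with h0 | h1
    · subst h0
      have hfz : f 0 = 0 := by rw [hf_def]; simp
      rw [hfz]
      exact add_nonneg (hg₁0 0) (hg₂0 0)
    · have hl1 : (1:ℝ) ≤ (ℓ:ℝ) := by exact_mod_cast h1
      have hl0 : (0:ℝ) < (ℓ:ℝ) := by linarith
      have hkey := aux2' ℓ σ (by linarith) h1
      have hbpos : 0 ≤ b ℓ ^ 2 := sq_nonneg _
      have hmono : f ℓ ≤ (ℓ:ℝ) ^ (1 - 2*σ) * b ℓ ^ 2 := by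
        rw [hf_def]; dsimp only
        exact mul_le_mul_of_nonneg_right hkey hbpos
      rcases le_or_gt ℓ N with hle | hgt
      · -- low frequency
        have hb2 := aux3' (ρ * (ℓ:ℝ)) σ c₁ (b ℓ) (hlow ℓ h1 hle) (by positivity)
        have hg₂z : g₂ ℓ = 0 := by rw [hg₂_def]; dsimp only; rw [if_neg (by omega)]; ring
        have hg₁v : g₁ ℓ = c₁ ^ 2 * ρ ^ (2*σ) * ℓ := by
          rw [hg₁_def]; dsimp only; rw [if_pos ⟨h1, hle⟩]
        rw [hg₂z, hg₁v, add_zero]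
        have e1 : (ρ * (ℓ:ℝ)) ^ (2*σ) = ρ ^ (2*σ) * (ℓ:ℝ) ^ (2*σ) :=
          Real.mul_rpow hρ0.le hl0.le
        have e2 : (ℓ:ℝ) ^ (1 - 2*σ) * (ℓ:ℝ) ^ (2*σ) = (ℓ:ℝ) := by
          rw [← Real.rpow_add hl0]
          norm_num
        calc f ℓ ≤ (ℓ:ℝ) ^ (1 - 2*σ) * b ℓ ^ 2 := hmono
          _ ≤ (ℓ:ℝ) ^ (1 - 2*σ) * (c₁ ^ 2 * (ρ * (ℓ:ℝ)) ^ (2*σ)) := by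
              apply mul_le_mul_of_nonneg_left hb2 (Real.rpow_nonneg hl0.le _)
          _ = c₁ ^ 2 * ρ ^ (2*σ) * ((ℓ:ℝ) ^ (1 - 2*σ) * (ℓ:ℝ) ^ (2*σ)) := by
              rw [e1]; ring
          _ = c₁ ^ 2 * ρ ^ (2*σ) * (ℓ:ℝ) := by rw [e2]
      · -- high frequency
        have hb2 : b ℓ ^ 2 ≤ c₂ ^ 2 := by
          rw [← sq_abs (b ℓ)]
          exact pow_le_pow_left₀ (abs_nonneg _) (hhigh ℓ hgt) 2
        have hg₁z : g₁ ℓ = 0 := by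
          rw [hg₁_def]; dsimp only; rw [if_neg (by omega)]
        have hg₂v : g₂ ℓ = c₂ ^ 2 * (ℓ:ℝ) ^ (-1-q) := by
          rw [hg₂_def]; dsimp only; rw [if_pos hgt]
        rw [hg₁z, hg₂v, zero_add]
        have e3 : (1:ℝ) - 2*σ = -1 - q := by rw [hq_def]; ring
        calc f ℓ ≤ (ℓ:ℝ) ^ (1 - 2*σ) * b ℓ ^ 2 := hmono
          _ ≤ (ℓ:ℝ) ^ (1 - 2*σ) * c₂ ^ 2 := by
              apply mul_le_mul_of_nonneg_left hb2 (Real.rpow_nonneg hl0.le _)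
          _ = c₂ ^ 2 * (ℓ:ℝ) ^ (-1-q) := by rw [e3]; ring
  -- summability
  have hg₁summ : Summable g₁ := by
    apply summable_of_ne_finset_zero (s := Finset.range (N+1))
    intro ℓ hℓ
    rw [Finset.mem_range] at hℓ
    rw [hg₁_def]; dsimp only; rw [if_neg (by omega)]
  have hhsumm : Summable (fun ℓ : ℕ => (if N < ℓ then (ℓ:ℝ) ^ (-1-q) else 0)) := by
    apply Summable.of_nonneg_of_le
      (fun ℓ => by split <;> [exact Real.rpow_nonneg (Nat.cast_nonneg _) _; exact le_refl 0])
      (fun ℓ => by split <;> [exact le_refl _; exact Real.rpow_nonneg (Nat.cast_nonneg _) _])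
      hsummT
  have hg₂summ : Summable g₂ := by rw [hg₂_def]; exact hhsumm.mul_left _
  have hgsumm : Summable (fun ℓ => g₁ ℓ + g₂ ℓ) := hg₁summ.add hg₂summ
  have hfsumm : Summable f := Summable.of_nonneg_of_le hf0 hfg hgsumm
  refine ⟨hfsumm, ?_⟩
  rw [hexp]
  have hρq : (0:ℝ) < ρ ^ q := Real.rpow_pos_of_pos hρ0 _
  -- bound on tsum g₁
  have htg₁ : ∑' ℓ, g₁ ℓ ≤ 2 * c₁ ^ 2 * ρ ^ q := by
    rw [tsum_eq_sum (s := Finset.range (N+1))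
      (fun ℓ hℓ => by
        rw [Finset.mem_range] at hℓ
        rw [hg₁_def]; dsimp only; rw [if_neg (by omega)])]
    have hsum_le : ∑ ℓ ∈ Finset.range (N+1), g₁ ℓ
        ≤ ∑ ℓ ∈ Finset.range (N+1), c₁ ^ 2 * ρ ^ (2*σ) * (ℓ:ℝ) := by
      apply Finset.sum_le_sum
      intro i _
      rw [hg₁_def]; dsimp only
      split
      · exact le_refl _
      · have : (0:ℝ) < ρ ^ (2*σ) := Real.rpow_pos_of_pos hρ0 _
        positivity
    have hgauss : ∑ ℓ ∈ Finset.range (N+1), (ℓ:ℝ) ≤ 2 * (N:ℝ)^2 := by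
      have h := Finset.sum_range_id_mul_two (N+1)
      have hcast : (∑ ℓ ∈ Finset.range (N+1), (ℓ:ℝ)) * 2 = ((N:ℝ)+1) * (N:ℝ) := by
        have := congrArg (fun n : ℕ => (n:ℝ)) h
        push_cast at this
        convert this using 2 <;> push_cast <;> ring
      have hN2 : (N:ℝ) ≤ (N:ℝ)^2 := by
        rcases Nat.eq_zero_or_pos N with h0 | h1
        · rw [h0]; norm_num
        · have : (1:ℝ) ≤ (N:ℝ) := by exact_mod_cast h1
          nlinarith
      nlinarith
    have hρσ : (0:ℝ) < ρ ^ (2*σ) := Real.rpow_pos_of_pos hρ0 _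
    have hN2 : (N:ℝ)^2 ≤ (ρ⁻¹)^2 := by
      have h1 : (N:ℝ) ≤ ρ⁻¹ := by linarith
      have h2 : (0:ℝ) ≤ (N:ℝ) := Nat.cast_nonneg N
      nlinarith
    have e := aux1' ρ hρ0 q σ hq_def
    calc ∑ ℓ ∈ Finset.range (N+1), g₁ ℓ
        ≤ ∑ ℓ ∈ Finset.range (N+1), c₁ ^ 2 * ρ ^ (2*σ) * (ℓ:ℝ) := hsum_le
      _ = c₁ ^ 2 * ρ ^ (2*σ) * ∑ ℓ ∈ Finset.range (N+1), (ℓ:ℝ) := by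
          rw [Finset.mul_sum]
      _ ≤ c₁ ^ 2 * ρ ^ (2*σ) * (2 * (N:ℝ)^2) := by
          apply mul_le_mul_of_nonneg_left hgauss (by positivity)
      _ ≤ c₁ ^ 2 * ρ ^ (2*σ) * (2 * (ρ⁻¹)^2) := by
          apply mul_le_mul_of_nonneg_left (by linarith) (by positivity)
      _ = 2 * c₁ ^ 2 * (ρ ^ (2*σ) * (ρ⁻¹)^(2:ℕ)) := by ring
      _ = 2 * c₁ ^ 2 * ρ ^ q := by rw [e]
  -- bound on tsum g₂
  have htg₂ : ∑' ℓ, g₂ ℓ ≤ c₂ ^ 2 * (2 ^ q / q + T * 4 ^ q) * ρ ^ q := by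
    have htg₂eq : ∑' ℓ, g₂ ℓ
        = c₂ ^ 2 * ∑' ℓ : ℕ, (if N < ℓ then (ℓ:ℝ) ^ (-1-q) else 0) := by
      rw [hg₂_def]; exact tsum_mul_left
    rw [htg₂eq]
    rcases le_or_gt ρ (1/4 : ℝ) with hρ4 | hρ4
    · -- small rho : tail estimate
      have hρi4 : (4:ℝ) ≤ ρ⁻¹ := by
        rw [show (4:ℝ) = (1/4:ℝ)⁻¹ by norm_num]
        exact inv_anti₀ hρ0 hρ4
      have hN1 : 1 ≤ N := by
        rw [hN_def]
        apply Nat.le_floor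
        push_cast
        linarith
      have htail := tail_bound' q hq N hN1
      have hNhalf : ρ⁻¹ / 2 ≤ (N:ℝ) := by linarith
      have hNq : (N:ℝ) ^ (-q) ≤ (ρ⁻¹/2) ^ (-q) := by
        apply Real.rpow_le_rpow_of_nonpos (by positivity) hNhalf (by linarith)
      have hhalf : (ρ⁻¹/2 : ℝ) = (2*ρ)⁻¹ := by
        field_simp
      have hpow : (ρ⁻¹/2 : ℝ) ^ (-q) = 2 ^ q * ρ ^ q := by
        rw [hhalf, Real.inv_rpow (by positivity), Real.rpow_neg (by positivity), inv_inv,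
          Real.mul_rpow (by norm_num) hρ0.le]
      calc c₂ ^ 2 * ∑' ℓ : ℕ, (if N < ℓ then (ℓ:ℝ) ^ (-1-q) else 0)
          ≤ c₂ ^ 2 * ((N:ℝ) ^ (-q) / q) :=
            mul_le_mul_of_nonneg_left htail (sq_nonneg _)
        _ ≤ c₂ ^ 2 * ((2 ^ q * ρ ^ q) / q) := by
            rw [hpow] at hNq
            gcongr
        _ = c₂ ^ 2 * (2 ^ q / q) * ρ ^ q := by ring
        _ ≤ c₂ ^ 2 * (2 ^ q / q + T * 4 ^ q) * ρ ^ q := by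
            apply mul_le_mul_of_nonneg_right _ hρq.le
            have : 0 ≤ T * 4 ^ q := mul_nonneg hT0 h4q.le
            nlinarith [sq_nonneg c₂]
    · -- big rho : crude estimate
      have htT : ∑' ℓ : ℕ, (if N < ℓ then (ℓ:ℝ) ^ (-1-q) else 0) ≤ T := by
        rw [hT_def]
        apply Summable.tsum_le_tsum _ hhsumm hsummT
        intro ℓ
        split
        · exact le_refl _
        · exact Real.rpow_nonneg (Nat.cast_nonneg _) _
      have h4ρ : (1:ℝ) ≤ (4*ρ) ^ q := Real.one_le_rpow (by linarith) hq.le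
      have h4ρ' : (1:ℝ) ≤ 4 ^ q * ρ ^ q := by
        rwa [Real.mul_rpow (by norm_num) hρ0.le] at h4ρ
      calc c₂ ^ 2 * ∑' ℓ : ℕ, (if N < ℓ then (ℓ:ℝ) ^ (-1-q) else 0)
          ≤ c₂ ^ 2 * T := mul_le_mul_of_nonneg_left htT (sq_nonneg _)
        _ ≤ c₂ ^ 2 * T * (4 ^ q * ρ ^ q) := by nlinarith [sq_nonneg c₂, mul_nonneg (sq_nonneg c₂) hT0]
        _ = c₂ ^ 2 * (T * 4 ^ q) * ρ ^ q := by ring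
        _ ≤ c₂ ^ 2 * (2 ^ q / q + T * 4 ^ q) * ρ ^ q := by
            apply mul_le_mul_of_nonneg_right _ hρq.le
            have : 0 ≤ 2 ^ q / q := by positivity
            nlinarith [sq_nonneg c₂]
  -- combine
  calc ∑' ℓ, f ℓ ≤ ∑' ℓ, (g₁ ℓ + g₂ ℓ) := Summable.tsum_le_tsum hfg hfsumm hgsumm
    _ = (∑' ℓ, g₁ ℓ) + ∑' ℓ, g₂ ℓ := Summable.tsum_add hg₁summ hg₂summ
    _ ≤ 2 * c₁ ^ 2 * ρ ^ q + c₂ ^ 2 * (2 ^ q / q + T * 4 ^ q) * ρ ^ q := by linarith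
    _ ≤ (2 * c₁ ^ 2 + c₂ ^ 2 * (2 ^ q / q + T * 4 ^ q) + 1) * ρ ^ q := by nlinarith [hρq]
end
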